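/- Let A be a ring, let M be a Noetherian uniform right A-module, and let x be a central element of A such that Nx = 0 for some nonzero submodule N of M. Then there exists n ≥ 1 with Mxⁿ = 0. -/

import Mathlib

open MulOpposite

/-- A module is uniform if any two nonzero submodules intersect nontrivially. -/
def IsUniformMod (R : Type*) [Ring R] (M : Type*) [AddCommGroup M] [Module R M] : Prop :=
  ∀ N L : Submodule R M, N ≠ ⊥ → L ≠ ⊥ → N ⊓ L ≠ ⊥

/-- Let `M` be a Noetherian uniform right `A`-module and `x` a central element of `A`
killing some nonzero submodule `N` of `M`.  Then `M·xⁿ = 0` for some `n ≥ 1`.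
(Right `A`-modules are left `Aᵐᵒᵖ`-modules; `m·x` is `op x • m`.) -/
theorem pow_annihilates_of_uniform (A : Type*) [Ring A] (M : Type*) [AddCommGroup M]
    [Module Aᵐᵒᵖ M] (hNoeth : IsNoetherian Aᵐᵒᵖ M) (hUnif : IsUniformMod Aᵐᵒᵖ M)
    (x : A) (hx : ∀ a : A, a * x = x * a)
    (N : Submodule Aᵐᵒᵖ M) (hN : N ≠ ⊥) (hNx : ∀ m ∈ N, op x • m = 0) :
    ∃ n : ℕ, 1 ≤ n ∧ ∀ m : M, op (x ^ n) • m = 0 := by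
  -- multiplication by x as a linear map
  set f : M →ₗ[Aᵐᵒᵖ] M :=
    { toFun := fun m => op x • m
      map_add' := fun m n => smul_add _ m n
      map_smul' := fun a m => by
        simp only [RingHom.id_apply]
        rw [← mul_smul, ← mul_smul, ← op_unop a, ← op_mul, ← op_mul, hx (unop a)] } with hf
  have hfpow : ∀ (n : ℕ) (m : M), (f ^ n) m = op (x ^ n) • m := by
    intro n
    induction n with
    | zero => intro m; simp
    | succ k ih =>
      intro m
      rw [pow_succ, pow_succ, Module.End.mul_apply, ih, op_mul, mul_smul]
      show op (x ^ k) • (op x • m) = op x • op (x ^ k) • m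
      rw [← mul_smul, ← mul_smul, ← op_mul, ← op_mul, hx (x ^ k)]
  have hker : Monotone fun n : ℕ => LinearMap.ker (f ^ n) := by
    intro i j hij m hm
    simp only [LinearMap.mem_ker] at hm ⊢
    obtain ⟨k, rfl⟩ := Nat.exists_eq_add_of_le hij
    rw [add_comm, pow_add, Module.End.mul_apply, hm, map_zero]
  obtain ⟨n, hstab⟩ := monotone_stabilizes_iff_noetherian.mpr hNoeth
    ⟨fun n : ℕ => LinearMap.ker (f ^ n), hker⟩
  refine ⟨n + 1, by omega, ?_⟩
  by_contra hcon
  push_neg at hcon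
  obtain ⟨m₀, hm₀⟩ := hcon
  -- range of f^(n+1) is nonzero
  have hrange : LinearMap.range (f ^ (n + 1)) ≠ ⊥ := by
    intro h
    apply hm₀
    rw [← hfpow]
    have : (f ^ (n + 1)) m₀ ∈ LinearMap.range (f ^ (n + 1)) := ⟨m₀, rfl⟩
    rw [h] at this
    exact this
  have hinter := hUnif _ _ hrange hN
  obtain ⟨y, hy⟩ := Submodule.exists_mem_ne_zero_of_ne_bot hinter
  obtain ⟨m, hm⟩ := hy.1.1
  have hyN := hy.1.2
  -- y = f^(n+1) m, y ∈ N so f y = 0, so m ∈ ker f^(n+2) = ker f^(n+1), so y = 0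
  have hfy : f y = 0 := by
    rw [hf]
    exact hNx y hyN
  have hm2 : m ∈ LinearMap.ker (f ^ (n + 2)) := by
    simp only [LinearMap.mem_ker]
    rw [pow_succ', Module.End.mul_apply, hm, hfy]
  have hstab2 : LinearMap.ker (f ^ (n + 1)) = LinearMap.ker (f ^ (n + 2)) := by
    have h1 := hstab (n + 1) (by omega)
    have h2 := hstab (n + 2) (by omega)
    simpa using h1.symm.trans h2
  rw [← hstab2, LinearMap.mem_ker, hm] at hm2
  exact hy.2 hm2
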